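/- arXiv:2411.03161 — 5 statements merged into one kernel-verified Lean document; each statement's English description precedes it below -/
import Mathlib

section
/- Let n ≥ 1, s ≥ 1, and let h ∈ ℂ[Y_1,…,Y_n] be a homogeneous harmonic polynomial of degree k with k ≤ s. Then the differential operator h(∂/∂X_1,…,∂/∂X_n) applied to q_n^s gives h∘q_n^s = (2^k · s!/(s−k)!) · q_n^{s−k} · h(X_1,…,X_n), where on the right-hand side h is rewritten in the X variables. -/
open MvPolynomial

noncomputable def qpoly (n : ℕ) : MvPolynomial (Fin n) ℂ :=
  ∑ i : Fin n, X i ^ 2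

noncomputable def linForm {n : ℕ} (a : Fin n → ℂ) : MvPolynomial (Fin n) ℂ :=
  ∑ i : Fin n, C (a i) * X i

noncomputable def dotC {n : ℕ} (a b : Fin n → ℂ) : ℂ :=
  ∑ i : Fin n, a i * b i

noncomputable def diffOp {n : ℕ} (φ f : MvPolynomial (Fin n) ℂ) : MvPolynomial (Fin n) ℂ :=
  ∑ d ∈ φ.support, φ.coeff d •
    ((List.ofFn fun i : Fin n =>
        ((pderiv i).toLinearMap : MvPolynomial (Fin n) ℂ →ₗ[ℂ] MvPolynomial (Fin n) ℂ) ^ d i).prod f)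

noncomputable def lap {n : ℕ} (f : MvPolynomial (Fin n) ℂ) : MvPolynomial (Fin n) ℂ :=
  ∑ i : Fin n, pderiv i (pderiv i f)

/-! ### Auxiliary machinery -/

lemma pderiv_comm' {n : ℕ} (i j : Fin n) (f : MvPolynomial (Fin n) ℂ) :
    pderiv i (pderiv j f) = pderiv j (pderiv i f) := by
  induction f using MvPolynomial.induction_on with
  | C a => simp [pderiv_C]
  | add p q hp hq => simp [hp, hq]
  | mul_X p m ih =>
    simp only [pderiv_mul, map_add, pderiv_mul, ih]
    have h1 : pderiv i (pderiv j (X m : MvPolynomial (Fin n) ℂ)) = 0 := by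
      rcases eq_or_ne m j with rfl | hmj
      · simp
      · simp [pderiv_X_of_ne hmj]
    have h2 : pderiv j (pderiv i (X m : MvPolynomial (Fin n) ℂ)) = 0 := by
      rcases eq_or_ne m i with rfl | hmi
      · simp
      · simp [pderiv_X_of_ne hmi]
    rw [h1, h2]
    ring

noncomputable def Dop {n : ℕ} (i : Fin n) :
    Module.End ℂ (MvPolynomial (Fin n) ℂ) := (pderiv i).toLinearMap

lemma Dop_comm {n : ℕ} : ∀ a ∈ Set.range (Dop (n := n)), ∀ b ∈ Set.range (Dop (n := n)),
    a * b = b * a := by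
  rintro _ ⟨i, rfl⟩ _ ⟨j, rfl⟩
  exact LinearMap.ext fun f => pderiv_comm' i j f

noncomputable instance adjComm (n : ℕ) :
    CommSemiring (Algebra.adjoin ℂ (Set.range (Dop (n := n)))) :=
  Algebra.adjoinCommSemiringOfComm ℂ Dop_comm

noncomputable def DA {n : ℕ} (i : Fin n) : Algebra.adjoin ℂ (Set.range (Dop (n := n))) :=
  ⟨Dop i, Algebra.subset_adjoin ⟨i, rfl⟩⟩

noncomputable def Phi (n : ℕ) :
    MvPolynomial (Fin n) ℂ →ₐ[ℂ] Module.End ℂ (MvPolynomial (Fin n) ℂ) :=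
  (Algebra.adjoin ℂ (Set.range (Dop (n := n)))).val.comp (aeval DA)

lemma Phi_X {n : ℕ} (i : Fin n) : Phi n (X i) = Dop i := by
  simp [Phi, DA]

lemma Phi_monomial {n : ℕ} (d : Fin n →₀ ℕ) (c : ℂ) (f : MvPolynomial (Fin n) ℂ) :
    Phi n (monomial d c) f =
      c • ((List.ofFn fun i : Fin n => Dop (n := n) i ^ d i).prod f) := by
  have h1 : (monomial d c : MvPolynomial (Fin n) ℂ) = C c * ∏ i : Fin n, X i ^ d i := by
    rw [monomial_eq]
    congr 1
    rw [Finsupp.prod]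
    apply Finset.prod_subset (Finset.subset_univ _)
    intro x _ hx
    simp [Finsupp.notMem_support_iff.mp hx]
  have h2 : aeval DA (monomial d c) = c • ∏ i : Fin n, DA (n := n) i ^ d i := by
    rw [h1, map_mul, map_prod]
    simp [Algebra.smul_def]
  have h3 : Phi n (monomial d c) =
      (Algebra.adjoin ℂ (Set.range (Dop (n := n)))).val (c • ∏ i : Fin n, DA (n := n) i ^ d i) := by
    rw [Phi, AlgHom.comp_apply, h2]
  have h4 := map_smul ((Algebra.adjoin ℂ (Set.range (Dop (n := n)))).val.toLinearMap) c
    (∏ i : Fin n, DA (n := n) i ^ d i)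
  simp only [AlgHom.toLinearMap_apply] at h4
  rw [h3, h4]
  rw [← List.prod_ofFn (f := fun i : Fin n => DA (n := n) i ^ d i), map_list_prod,
    List.map_ofFn]
  rw [LinearMap.smul_apply]
  congr 2

lemma diffOp_eq {n : ℕ} (φ f : MvPolynomial (Fin n) ℂ) : diffOp φ f = Phi n φ f := by
  conv_rhs => rw [φ.as_sum]
  rw [map_sum, LinearMap.sum_apply, diffOp]
  exact Finset.sum_congr rfl fun d _ => (Phi_monomial d _ f).symm

lemma diffOp_C {n : ℕ} (c : ℂ) (f : MvPolynomial (Fin n) ℂ) :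
    diffOp (C c) f = c • f := by
  rw [diffOp_eq]
  have : (C c : MvPolynomial (Fin n) ℂ) = algebraMap ℂ _ c := rfl
  rw [this, AlgHom.commutes]
  exact Module.algebraMap_end_apply ℂ ℂ _ c f

lemma diffOp_smul {n : ℕ} (c : ℂ) (φ f : MvPolynomial (Fin n) ℂ) :
    diffOp (c • φ) f = c • diffOp φ f := by
  have : (c • φ) = C c * φ := (smul_eq_C_mul φ c).symm ▸ rfl
  rw [diffOp_eq, diffOp_eq, smul_eq_C_mul,
    show (C c * φ : MvPolynomial (Fin n) ℂ) = algebraMap ℂ _ c * φ from rfl,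
    map_mul, AlgHom.commutes, Module.End.mul_apply, Module.algebraMap_end_apply]

lemma diffOp_sum {n : ℕ} {ι : Type*} (t : Finset ι) (φ : ι → MvPolynomial (Fin n) ℂ)
    (f : MvPolynomial (Fin n) ℂ) :
    diffOp (∑ i ∈ t, φ i) f = ∑ i ∈ t, diffOp (φ i) f := by
  simp only [diffOp_eq, map_sum, LinearMap.sum_apply]

lemma diffOp_X_mul {n : ℕ} (i : Fin n) (φ f : MvPolynomial (Fin n) ℂ) :
    diffOp (X i * φ) f = pderiv i (diffOp φ f) := by
  rw [diffOp_eq, diffOp_eq, map_mul, Phi_X, Module.End.mul_apply]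
  rfl

/-! ### Euler's identity and homogeneity of derivatives -/

lemma degreeFin {n : ℕ} (d : Fin n →₀ ℕ) : d.degree = ∑ i : Fin n, d i := by
  rw [Finsupp.degree]
  exact Finset.sum_subset (Finset.subset_univ _)
    (fun x _ hx => Finsupp.notMem_support_iff.mp hx)

lemma X_mul_pderiv_monomial {n : ℕ} (i : Fin n) (d : Fin n →₀ ℕ) (c : ℂ) :
    X i * pderiv i (monomial d c) = d i • monomial d c := by
  rw [pderiv_monomial]
  rcases Nat.eq_zero_or_pos (d i) with h0 | h1
  · simp [h0]
  · have hle : Finsupp.single i 1 ≤ d := by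
      rw [Finsupp.single_le_iff]; exact h1
    rw [X, monomial_mul, one_mul, add_comm, tsub_add_cancel_of_le hle, smul_monomial]
    congr 1
    rw [nsmul_eq_mul, mul_comm]

lemma euler {n k : ℕ} {h : MvPolynomial (Fin n) ℂ} (hhom : h.IsHomogeneous k) :
    ∑ i : Fin n, X i * pderiv i h = ((k : ℂ)) • h := by
  have hmono : ∀ d ∈ h.support,
      ∑ i : Fin n, X i * pderiv i (monomial d (h.coeff d)) = ((k : ℂ)) • monomial d (h.coeff d) := by
    intro d hd
    have hdeg : d.degree = k := by
      rw [Finsupp.degree_eq_weight_one]; exact hhom (mem_support_iff.mp hd)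
    calc ∑ i : Fin n, X i * pderiv i (monomial d (h.coeff d))
        = ∑ i : Fin n, d i • monomial d (h.coeff d) :=
          Finset.sum_congr rfl fun i _ => X_mul_pderiv_monomial i d _
      _ = (∑ i : Fin n, d i) • monomial d (h.coeff d) := (Finset.sum_smul).symm
      _ = ((k : ℂ)) • monomial d (h.coeff d) := by
          rw [← degreeFin, hdeg, Nat.cast_smul_eq_nsmul]
  calc ∑ i : Fin n, X i * pderiv i h
      = ∑ i : Fin n, ∑ d ∈ h.support, X i * pderiv i (monomial d (h.coeff d)) := by
        refine Finset.sum_congr rfl fun i _ => ?_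
        conv_lhs => rw [h.as_sum]
        rw [map_sum, Finset.mul_sum]
    _ = ∑ d ∈ h.support, ∑ i : Fin n, X i * pderiv i (monomial d (h.coeff d)) :=
        Finset.sum_comm
    _ = ∑ d ∈ h.support, ((k : ℂ)) • monomial d (h.coeff d) := Finset.sum_congr rfl hmono
    _ = ((k : ℂ)) • h := by rw [← Finset.smul_sum, ← h.as_sum]

lemma isHomog_pderiv {n k : ℕ} (i : Fin n) {h : MvPolynomial (Fin n) ℂ}
    (hhom : h.IsHomogeneous (k + 1)) : (pderiv i h).IsHomogeneous k := by
  have hrw : pderiv i h = ∑ d ∈ h.support, pderiv i (monomial d (h.coeff d)) := by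
    rw [← map_sum, ← h.as_sum]
  rw [hrw]
  apply IsHomogeneous.sum
  intro d hd
  rw [pderiv_monomial]
  rcases Nat.eq_zero_or_pos (d i) with h0 | h1
  · rw [h0]
    simp only [Nat.cast_zero, mul_zero, map_zero]
    exact isHomogeneous_zero _ _ _
  · apply isHomogeneous_monomial
    have hdeg : d.degree = k + 1 := by
      rw [Finsupp.degree_eq_weight_one]; exact hhom (mem_support_iff.mp hd)
    have hle : Finsupp.single i 1 ≤ d := by
      rw [Finsupp.single_le_iff]; exact h1
    have he : (d - Finsupp.single i 1) + Finsupp.single i 1 = d := tsub_add_cancel_of_le hle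
    have hdd : d.degree = (d - Finsupp.single i 1).degree + 1 := by
      conv_lhs => rw [← he]
      rw [degreeFin, degreeFin]
      simp [Finsupp.add_apply, Finset.sum_add_distrib, Finsupp.single_apply]
    omega

lemma lap_pderiv {n : ℕ} (j : Fin n) (h : MvPolynomial (Fin n) ℂ) :
    lap (pderiv j h) = pderiv j (lap h) := by
  rw [lap, lap, map_sum]
  exact Finset.sum_congr rfl fun i _ => by
    rw [pderiv_comm' i j h, pderiv_comm' i j (pderiv i h)]

/-! ### Derivatives of the quadric -/

lemma pderiv_q {n : ℕ} (i : Fin n) : pderiv i (qpoly n) = 2 * X i := by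
  rw [qpoly, map_sum]
  rw [Finset.sum_eq_single i (fun j _ hji => by simp [pderiv_pow, pderiv_X_of_ne hji])
    (fun hi => absurd (Finset.mem_univ i) hi)]
  simp [pderiv_pow]

lemma pderiv_qpow {n m : ℕ} (i : Fin n) :
    pderiv i (qpoly n ^ (m + 1)) = ((2 * ((m : ℂ) + 1))) • (qpoly n ^ m * X i) := by
  rw [pderiv_pow, pderiv_q, Nat.add_sub_cancel]
  rw [smul_eq_C_mul]
  push_cast
  simp only [map_add, map_mul, map_natCast, map_ofNat, map_one]
  ring

lemma isHomog_C {n : ℕ} {h : MvPolynomial (Fin n) ℂ} (hhom : h.IsHomogeneous 0) :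
    h = C (h.coeff 0) := by
  ext d
  rcases eq_or_ne d 0 with rfl | hd
  · simp
  · rw [hhom.coeff_eq_zero (by rwa [Ne, Finsupp.degree_eq_zero_iff])]
    rw [coeff_C, if_neg (Ne.symm hd)]

/-! ### Main theorem -/

/-- For a homogeneous harmonic polynomial h of degree k ≤ s,
h ∘ q_n^s = 2^k · s!/(s−k)! · q_n^{s−k} · h. -/
theorem diffOp_harmonic_power_of_quadric (n s k : ℕ) (hn : 1 ≤ n) (hs : 1 ≤ s) (hk : k ≤ s)
    (h : MvPolynomial (Fin n) ℂ) (hhom : h.IsHomogeneous k) (hharm : lap h = 0) :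
    diffOp h (qpoly n ^ s) =
      ((2 : ℂ) ^ k * (Nat.factorial s : ℂ) / (Nat.factorial (s - k) : ℂ)) •
        (qpoly n ^ (s - k) * h) := by
  induction k generalizing h with
  | zero =>
    rw [isHomog_C hhom, diffOp_C]
    rw [Nat.sub_zero, pow_zero, one_mul, div_self (by exact_mod_cast s.factorial_ne_zero)]
    rw [one_smul, mul_comm, C_mul']
  | succ k ih =>
    have hk' : k ≤ s := (Nat.le_succ k).trans hk
    obtain ⟨m, hm⟩ : ∃ m, s - k = m + 1 := ⟨s - (k + 1), by omega⟩
    have hmm : s - (k + 1) = m := by omega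
    set c' : ℂ := (2 : ℂ) ^ k * (s.factorial : ℂ) / ((s - k).factorial : ℂ) with hc'
    have hker : ∀ i : Fin n, diffOp (pderiv i h) (qpoly n ^ s) =
        c' • (qpoly n ^ (m + 1) * pderiv i h) := by
      intro i
      rw [← hm]
      exact ih hk' (pderiv i h) (isHomog_pderiv i hhom)
        (by rw [lap_pderiv, hharm, map_zero])
    have hstep : (((k : ℂ) + 1)) • diffOp h (qpoly n ^ s) =
        ∑ i : Fin n, pderiv i (diffOp (pderiv i h) (qpoly n ^ s)) := by
      calc (((k : ℂ) + 1)) • diffOp h (qpoly n ^ s)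
          = diffOp ((((k : ℂ) + 1)) • h) (qpoly n ^ s) := (diffOp_smul _ _ _).symm
        _ = diffOp (∑ i : Fin n, X i * pderiv i h) (qpoly n ^ s) := by
            rw [euler hhom]; norm_cast
        _ = ∑ i : Fin n, diffOp (X i * pderiv i h) (qpoly n ^ s) := diffOp_sum _ _ _
        _ = ∑ i : Fin n, pderiv i (diffOp (pderiv i h) (qpoly n ^ s)) :=
            Finset.sum_congr rfl fun i _ => diffOp_X_mul i _ _
    have hterm : ∀ i : Fin n, pderiv i (qpoly n ^ (m + 1) * pderiv i h) =
        (2 * ((m : ℂ) + 1)) • (qpoly n ^ m * (X i * pderiv i h))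
          + qpoly n ^ (m + 1) * pderiv i (pderiv i h) := by
      intro i
      rw [pderiv_mul, pderiv_qpow, smul_mul_assoc, mul_assoc]
    have hsum : ∑ i : Fin n, pderiv i (diffOp (pderiv i h) (qpoly n ^ s)) =
        (c' * (2 * ((m : ℂ) + 1) * ((k : ℂ) + 1))) • (qpoly n ^ m * h) := by
      calc ∑ i : Fin n, pderiv i (diffOp (pderiv i h) (qpoly n ^ s))
          = ∑ i : Fin n, pderiv i (c' • (qpoly n ^ (m + 1) * pderiv i h)) :=
            Finset.sum_congr rfl fun i _ => by rw [hker i]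
        _ = c' • ∑ i : Fin n, pderiv i (qpoly n ^ (m + 1) * pderiv i h) := by
            rw [Finset.smul_sum]
            exact Finset.sum_congr rfl fun i _ => (pderiv i).map_smul c' _
        _ = c' • ∑ i : Fin n, ((2 * ((m : ℂ) + 1)) • (qpoly n ^ m * (X i * pderiv i h))
              + qpoly n ^ (m + 1) * pderiv i (pderiv i h)) := by
            rw [Finset.sum_congr rfl fun i _ => hterm i]
        _ = c' • ((2 * ((m : ℂ) + 1)) • (qpoly n ^ m * (((k + 1 : ℕ) : ℂ) • h))) := by
            rw [Finset.sum_add_distrib, ← Finset.smul_sum, ← Finset.mul_sum, ← Finset.mul_sum,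
              euler hhom, show ∑ i : Fin n, pderiv i (pderiv i h) = lap h from rfl, hharm,
              mul_zero, add_zero]
        _ = (c' * (2 * ((m : ℂ) + 1) * ((k : ℂ) + 1))) • (qpoly n ^ m * h) := by
            rw [mul_smul_comm, smul_smul, smul_smul]
            congr 1
            push_cast
            ring
    have hne : ((k : ℂ) + 1) ≠ 0 := Nat.cast_add_one_ne_zero k
    refine smul_right_injective (MvPolynomial (Fin n) ℂ) hne ?_
    dsimp only
    rw [hstep, hsum, hmm, smul_smul]
    congr 1
    rw [hc', hm, Nat.factorial_succ]
    have h1 : ((m.factorial : ℂ)) ≠ 0 := by exact_mod_cast m.factorial_ne_zero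
    have h2 : ((m : ℂ) + 1) ≠ 0 := Nat.cast_add_one_ne_zero m
    push_cast
    field_simp
    ring
end

section
/- Let n ≥ 1 and s ≥ 1, and for A ∈ GL_n(ℂ) let A·f denote the polynomial obtained from f ∈ ℂ[X_1,…,X_n] by substituting Σ_{k} A_{kj} X_k for X_j for each j. Then A·(q_n^s) = q_n^s if and only if A = ζB for some ζ ∈ ℂ with ζ^{2s} = 1 and some matrix B with B^T B = I (i.e., B ∈ O_n(ℂ)). -/
open MvPolynomial

open Matrix

/-- bilinear sum attached to a matrix -/
noncomputable def bsum {n : ℕ} (M : Matrix (Fin n) (Fin n) ℂ) (x y : Fin n → ℂ) : ℂ :=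
  ∑ a : Fin n, ∑ b : Fin n, M a b * x a * y b

lemma bsum_single {n : ℕ} (M : Matrix (Fin n) (Fin n) ℂ) (a b : Fin n) :
    bsum M (Pi.single a 1) (Pi.single b 1) = M a b := by
  have hs : ∀ c d : Fin n, (Pi.single c 1 : Fin n → ℂ) d = if d = c then 1 else 0 := by
    intro c d
    rcases eq_or_ne d c with h | h
    · subst h; simp
    · simp [h, Pi.single_eq_of_ne h]
  simp [bsum, hs, mul_ite, ite_mul, Finset.sum_ite_eq', Finset.sum_ite_eq]

lemma bsum_add_right {n : ℕ} (M : Matrix (Fin n) (Fin n) ℂ) (x y z : Fin n → ℂ) :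
    bsum M x (y + z) = bsum M x y + bsum M x z := by
  unfold bsum
  rw [← Finset.sum_add_distrib]
  refine Finset.sum_congr rfl fun a _ => ?_
  rw [← Finset.sum_add_distrib]
  refine Finset.sum_congr rfl fun b _ => ?_
  simp [mul_add]

lemma bsum_add_left {n : ℕ} (M : Matrix (Fin n) (Fin n) ℂ) (x y z : Fin n → ℂ) :
    bsum M (x + y) z = bsum M x z + bsum M y z := by
  unfold bsum
  rw [← Finset.sum_add_distrib]
  refine Finset.sum_congr rfl fun a _ => ?_
  rw [← Finset.sum_add_distrib]
  refine Finset.sum_congr rfl fun b _ => ?_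
  simp only [Pi.add_apply]
  ring

lemma polarization {n : ℕ} (M N : Matrix (Fin n) (Fin n) ℂ)
    (hM : Mᵀ = M) (hN : Nᵀ = N)
    (h : ∀ x : Fin n → ℂ, bsum M x x = bsum N x x) : M = N := by
  ext a b
  have key : ∀ (P : Matrix (Fin n) (Fin n) ℂ), Pᵀ = P →
      bsum P (Pi.single a 1 + Pi.single b 1) (Pi.single a 1 + Pi.single b 1)
        = P a a + P b b + 2 * P a b := by
    intro P hP
    rw [bsum_add_left, bsum_add_right, bsum_add_right, bsum_single, bsum_single,
      bsum_single, bsum_single]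
    have hba : P b a = P a b := congrFun (congrFun hP a) b
    rw [hba]; ring
  have h1 := h (Pi.single a 1 + Pi.single b 1)
  rw [key M hM, key N hN] at h1
  have ha : M a a = N a a := by simpa only [bsum_single] using h (Pi.single a 1)
  have hb : M b b = N b b := by simpa only [bsum_single] using h (Pi.single b 1)
  rw [ha, hb] at h1
  have : (2:ℂ) * M a b = 2 * N a b := by linear_combination h1
  have h2 : (2:ℂ) ≠ 0 := two_ne_zero
  field_simp at this
  exact this

/-- evaluation of the substituted quadric -/
lemma bsum_smul {n : ℕ} (c : ℂ) (M : Matrix (Fin n) (Fin n) ℂ) (x y : Fin n → ℂ) :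
    bsum (c • M) x y = c * bsum M x y := by
  unfold bsum
  rw [Finset.mul_sum]
  refine Finset.sum_congr rfl fun a _ => ?_
  rw [Finset.mul_sum]
  refine Finset.sum_congr rfl fun b _ => ?_
  simp [Matrix.smul_apply]; ring

lemma eval_bind₁' {n : ℕ} (x : Fin n → ℂ) (g : Fin n → MvPolynomial (Fin n) ℂ)
    (φ : MvPolynomial (Fin n) ℂ) :
    eval x (bind₁ g φ) = eval (fun i => eval x (g i)) φ := by
  simp only [eval, eval₂Hom_bind₁]

lemma eval_subst {n : ℕ} (A : Matrix (Fin n) (Fin n) ℂ) (x : Fin n → ℂ) :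
    eval x ((bind₁ (fun j : Fin n => ∑ k : Fin n, C (A k j) * X k)) (qpoly n))
      = bsum (A * Aᵀ) x x := by
  have h1 : eval x ((bind₁ (fun j : Fin n => ∑ k : Fin n, C (A k j) * X k)) (qpoly n))
      = ∑ j : Fin n, (∑ k : Fin n, A k j * x k) ^ 2 := by
    rw [eval_bind₁']
    simp [qpoly]
  rw [h1]
  unfold bsum
  have h2 : ∀ j : Fin n, (∑ k : Fin n, A k j * x k) ^ 2
      = ∑ a : Fin n, ∑ b : Fin n, (A a j * A b j) * x a * x b := by
    intro j
    rw [sq, Finset.sum_mul_sum]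
    refine Finset.sum_congr rfl fun a _ => Finset.sum_congr rfl fun b _ => ?_
    ring
  simp only [h2]
  rw [Finset.sum_comm]
  refine Finset.sum_congr rfl fun a _ => ?_
  rw [Finset.sum_comm]
  refine Finset.sum_congr rfl fun b _ => ?_
  rw [Matrix.mul_apply, Finset.sum_mul, Finset.sum_mul]
  refine Finset.sum_congr rfl fun j _ => ?_
  simp [Matrix.transpose_apply]

lemma eval_qpoly {n : ℕ} (x : Fin n → ℂ) : eval x (qpoly n) = bsum 1 x x := by
  unfold qpoly bsum
  rw [map_sum]
  refine Finset.sum_congr rfl fun a _ => ?_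
  rw [Finset.sum_eq_single a]
  · simp [sq]
  · intro c _ hc; simp [Matrix.one_apply, Ne.symm hc]
  · simp

lemma qpoly_ne_zero {n : ℕ} (hn : 1 ≤ n) : qpoly n ≠ 0 := by
  intro h
  have := congrArg (eval (fun _ => (1:ℂ))) h
  simp [qpoly] at this
  exact absurd this (by positivity)

/-- extracting a root of unity from equal powers in a domain which is a ℂ-algebra -/
lemma pow_eq_pow_root_of_unity {n : ℕ} (s : ℕ) (hs : 1 ≤ s)
    (u v : MvPolynomial (Fin n) ℂ) (hv : v ≠ 0) (h : u ^ s = v ^ s) :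
    ∃ ζ : ℂ, ζ ^ s = 1 ∧ u = C ζ * v := by
  classical
  have hinj : Function.Injective
      (algebraMap (MvPolynomial (Fin n) ℂ) (FractionRing (MvPolynomial (Fin n) ℂ))) :=
    IsFractionRing.injective _ _
  set φ := algebraMap (MvPolynomial (Fin n) ℂ) (FractionRing (MvPolynomial (Fin n) ℂ)) with hφdef
  have hφv : φ v ≠ 0 := fun h0 => hv (hinj (by simpa using h0))
  have hxs : (φ u / φ v) ^ s = 1 := by
    have hne : φ (v ^ s) ≠ 0 := by rw [map_pow]; exact pow_ne_zero _ hφv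
    rw [div_pow, ← map_pow, ← map_pow, h, div_self hne]
  set g : ℂ →+* FractionRing (MvPolynomial (Fin n) ℂ) := φ.comp (C : ℂ →+* _) with hgdef
  set P : Polynomial ℂ := Polynomial.X ^ s - Polynomial.C 1 with hPdef
  have hPsplits : P.Splits := IsAlgClosed.splits P
  have hPne : P ≠ 0 := by
    have hdeg : P.natDegree = s := by
      rw [hPdef, Polynomial.natDegree_sub_C, Polynomial.natDegree_X_pow]
    intro h0
    rw [h0, Polynomial.natDegree_zero] at hdeg
    omega
  have hmapne : P.map g ≠ 0 := (Polynomial.map_ne_zero_iff g.injective).mpr hPne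
  have hroot : φ u / φ v ∈ (P.map g).roots := by
    rw [Polynomial.mem_roots hmapne]
    simp [hPdef, Polynomial.IsRoot, Polynomial.eval_map, hxs]
  rw [hPsplits.roots_map_of_injective g.injective, Multiset.mem_map] at hroot
  obtain ⟨ζ, hζmem, hζx⟩ := hroot
  have hζs : ζ ^ s = 1 := by
    have h2 := Polynomial.isRoot_of_mem_roots hζmem
    simp [hPdef, Polynomial.IsRoot] at h2
    linear_combination h2
  refine ⟨ζ, hζs, hinj ?_⟩
  have hgζ : φ (C ζ) = g ζ := rfl
  rw [φ.map_mul, hgζ, hζx, div_mul_cancel₀ _ hφv]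

open Matrix in
/-- For A ∈ GL_n(ℂ), the substitution action fixes q_n^s iff A = ζB with
ζ^{2s} = 1 and B complex orthogonal. -/
theorem stabilizer_of_power_of_quadric (n s : ℕ) (hn : 1 ≤ n) (hs : 1 ≤ s)
    (A : Matrix (Fin n) (Fin n) ℂ) (hA : IsUnit A.det) :
    (MvPolynomial.bind₁ (fun j : Fin n => ∑ k : Fin n, C (A k j) * X k)) (qpoly n ^ s)
        = qpoly n ^ s ↔
      ∃ (ζ : ℂ) (B : Matrix (Fin n) (Fin n) ℂ),
        ζ ^ (2 * s) = 1 ∧ Bᵀ * B = 1 ∧ A = ζ • B := by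
  constructor
  · intro h
    rw [map_pow] at h
    obtain ⟨ζ', hζ's, hu⟩ := pow_eq_pow_root_of_unity s hs _ _ (qpoly_ne_zero hn) h
    -- A * Aᵀ = ζ' • 1
    have hAAT : A * Aᵀ = ζ' • (1 : Matrix (Fin n) (Fin n) ℂ) := by
      apply polarization
      · rw [Matrix.transpose_mul, Matrix.transpose_transpose]
      · rw [Matrix.transpose_smul, Matrix.transpose_one]
      · intro x
        have h1 := congrArg (eval x) hu
        rw [eval_subst, _root_.map_mul, eval_C, eval_qpoly] at h1
        rw [bsum_smul, h1]
    have hζ'ne : ζ' ≠ 0 := by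
      intro h0
      rw [h0, zero_pow (by omega : s ≠ 0)] at hζ's
      exact zero_ne_one hζ's
    obtain ⟨ξ, hξ⟩ := IsAlgClosed.exists_pow_nat_eq (k := ℂ) ζ' (n := 2) two_pos
    have hξne : ξ ≠ 0 := by
      intro h0
      apply hζ'ne
      rw [← hξ, h0]; ring
    refine ⟨ξ, ξ⁻¹ • A, ?_, ?_, ?_⟩
    · rw [pow_mul, hξ, hζ's]  -- needs ξ^2 = ζ'
    · rw [← mul_eq_one_comm]
      rw [Matrix.transpose_smul, Matrix.smul_mul, Matrix.mul_smul, hAAT]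
      rw [smul_smul, smul_smul]
      have hinv : ξ⁻¹ * ξ⁻¹ * ζ' = 1 := by
        have hζξ : ζ' = ξ * ξ := by rw [← hξ]; ring
        rw [hζξ]; field_simp
      rw [hinv, one_smul]
    · rw [smul_smul, mul_inv_cancel₀ hξne, one_smul]
  · rintro ⟨ζ, B, hζ, hB, rfl⟩
    have hBBT : B * Bᵀ = 1 := mul_eq_one_comm.mpr hB
    apply MvPolynomial.funext
    intro x
    rw [map_pow, eval_pow, eval_pow]
    rw [eval_subst, eval_qpoly]
    have hM : (ζ • B) * (ζ • B)ᵀ = (ζ ^ 2) • (1 : Matrix (Fin n) (Fin n) ℂ) := by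
      rw [Matrix.transpose_smul, Matrix.smul_mul, Matrix.mul_smul, hBBT, smul_smul, sq]
    rw [hM, bsum_smul, mul_pow, ← pow_mul, hζ, one_mul]
end

section
/- Let n ≥ 2 and suppose q_n^3 admits a tight Waring decomposition, i.e., there exist points a_1,…,a_{T_{n,3}} ∈ ℂ^n with q_n^3 = Σ_{j=1}^{T_{n,3}} (a_j·x)^6, where T_{n,3} = binom(n+2, 3). Then n ≡ 2 (mod 3). -/
open MvPolynomial

namespace Tight
variable {n : ℕ}
local notation "R" => MvPolynomial (Fin n) ℂ

noncomputable def Dop (b : Fin n → ℂ) (f : R) : R :=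
  ∑ i : Fin n, C (b i) * pderiv i f


lemma Dop_C (b : Fin n → ℂ) (x : ℂ) : Dop b (C x : R) = 0 := by
  simp [Dop, pderiv_C]

lemma Dop_zero (b : Fin n → ℂ) : Dop b (0 : R) = 0 := by
  simp [Dop]

lemma Dop_add (b : Fin n → ℂ) (f g : R) : Dop b (f + g) = Dop b f + Dop b g := by
  simp [Dop, Finset.sum_add_distrib, mul_add]

lemma Dop_mul (b : Fin n → ℂ) (f g : R) :
    Dop b (f * g) = Dop b f * g + f * Dop b g := by
  simp only [Dop, pderiv_mul, mul_add, Finset.sum_add_distrib, Finset.sum_mul, Finset.mul_sum]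
  congr 1
  · exact Finset.sum_congr rfl fun i _ => by ring
  · exact Finset.sum_congr rfl fun i _ => by ring

lemma Dop_C_mul (b : Fin n → ℂ) (x : ℂ) (f : R) :
    Dop b (C x * f) = C x * Dop b f := by
  simp only [Dop, pderiv_mul, pderiv_C, zero_mul, zero_add, Finset.mul_sum]
  exact Finset.sum_congr rfl fun i _ => by ring

lemma Dop_linForm (b c : Fin n → ℂ) : Dop b (linForm c) = C (dotC b c) := by
  simp only [Dop, linForm, map_sum, pderiv_mul, pderiv_C, pderiv_X, zero_mul,
    zero_add, dotC]
  apply Finset.sum_congr rfl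
  intro i _
  rw [Finset.sum_eq_single i]
  · simp [Pi.single_apply]
  · intro j _ hj
    simp [Pi.single_apply, hj.symm]
  · simp

lemma Dop_qpoly (b : Fin n → ℂ) : Dop b (qpoly n) = C 2 * linForm b := by
  simp only [Dop, qpoly, map_sum, linForm, Finset.mul_sum]
  rw [map_ofNat]
  apply Finset.sum_congr rfl
  intro i _
  rw [Finset.sum_eq_single i]
  · simp [pow_two, pderiv_mul]; ring
  · intro j _ hj
    rw [pow_two, pderiv_mul]
    simp [pderiv_X, Pi.single_apply, hj]
  · simp

lemma Dop_pow (b : Fin n → ℂ) (f : R) (m : ℕ) :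
    Dop b (f ^ (m + 1)) = (m + 1 : ℕ) • (f ^ m * Dop b f) := by
  induction m with
  | zero => simp
  | succ m ih =>
    rw [pow_succ, Dop_mul, ih, pow_succ]
    push_cast [succ_nsmul]
    ring

lemma Dop_lin_pow (b c : Fin n → ℂ) (m : ℕ) :
    Dop b (linForm c ^ (m+1)) = C ((m+1 : ℂ) * dotC b c) * linForm c ^ m := by
  rw [Dop_pow, Dop_linForm, nsmul_eq_mul]
  simp only [map_mul, map_add, map_natCast, map_one]
  push_cast
  ring

lemma Dop_q3 (b : Fin n → ℂ) :
    Dop b (qpoly n ^ 3) = C 6 * (qpoly n ^ 2 * linForm b) := by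
  rw [show qpoly n ^ (3:ℕ) = qpoly n ^ (2+1) by norm_num, Dop_pow, Dop_qpoly, nsmul_eq_mul]
  simp only [map_ofNat]
  push_cast
  ring

lemma Dop_q2 (b : Fin n → ℂ) :
    Dop b (qpoly n ^ 2) = C 4 * (qpoly n * linForm b) := by
  rw [show qpoly n ^ (2:ℕ) = qpoly n ^ (1+1) by norm_num, Dop_pow, Dop_qpoly, nsmul_eq_mul]
  simp only [map_ofNat]
  push_cast
  ring

lemma Dop_lin6 (b c : Fin n → ℂ) :
    Dop b (linForm c ^ 6) = C (6 * dotC b c) * linForm c ^ 5 := by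
  have h := Dop_lin_pow b c 5
  norm_num at h
  rw [map_mul, map_ofNat]
  exact h

lemma Dop_lin5 (b c : Fin n → ℂ) :
    Dop b (linForm c ^ 5) = C (5 * dotC b c) * linForm c ^ 4 := by
  have h := Dop_lin_pow b c 4
  norm_num at h
  rw [map_mul, map_ofNat]
  exact h

lemma Dop_lin4 (b c : Fin n → ℂ) :
    Dop b (linForm c ^ 4) = C (4 * dotC b c) * linForm c ^ 3 := by
  have h := Dop_lin_pow b c 3
  norm_num at h
  rw [map_mul, map_ofNat]
  exact h

lemma Dop_lin3 (b c : Fin n → ℂ) :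
    Dop b (linForm c ^ 3) = C (3 * dotC b c) * linForm c ^ 2 := by
  have h := Dop_lin_pow b c 2
  norm_num at h
  rw [map_mul, map_ofNat]
  exact h

lemma Dop_lin2 (b c : Fin n → ℂ) :
    Dop b (linForm c ^ 2) = C (2 * dotC b c) * linForm c := by
  have h := Dop_lin_pow b c 1
  norm_num at h
  rw [map_mul]
  exact h

lemma Dop3_q3 (b : Fin n → ℂ) :
    Dop b (Dop b (Dop b (qpoly n ^ 3))) =
      C 48 * linForm b ^ 3 + C (72 * dotC b b) * (qpoly n * linForm b) := by
  simp only [Dop_q3, Dop_q2, Dop_C_mul, Dop_mul, Dop_add, Dop_zero, Dop_C, Dop_qpoly, Dop_linForm]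
  simp only [map_mul, map_ofNat]
  ring

lemma Dop3_lin6 (b c : Fin n → ℂ) :
    Dop b (Dop b (Dop b (linForm c ^ 6))) =
      C (120 * dotC b c ^ 3) * linForm c ^ 3 := by
  simp only [Dop_lin6, Dop_lin5, Dop_lin4, Dop_C_mul, Dop_add, Dop_zero, Dop_C, Dop_mul]
  simp only [map_mul, map_ofNat, map_pow]
  ring

lemma Dop4_q2 (b c : Fin n → ℂ) :
    Dop c (Dop c (Dop b (Dop b (qpoly n ^ 2)))) =
      C (16 * dotC b c ^ 2 + 8 * dotC b b * dotC c c) := by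
  simp only [Dop_q2, Dop_C_mul, Dop_mul, Dop_add, Dop_zero, Dop_C, Dop_qpoly, Dop_linForm]
  simp only [show dotC c b = dotC b c from by simp [dotC, mul_comm],
    map_mul, map_add, map_ofNat, map_pow]
  ring

lemma Dop4_lin4 (b c d : Fin n → ℂ) :
    Dop c (Dop c (Dop b (Dop b (linForm d ^ 4)))) =
      C (24 * dotC b d ^ 2 * dotC c d ^ 2) := by
  simp only [Dop_lin4, Dop_lin3, Dop_lin2, Dop_C_mul, Dop_add, Dop_zero, Dop_C, Dop_mul, Dop_linForm]
  simp only [map_mul, map_ofNat, map_pow]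
  ring

lemma pderiv_linForm (i : Fin n) (b : Fin n → ℂ) : pderiv i (linForm b) = C (b i) := by
  simp only [linForm, map_sum, pderiv_mul, pderiv_C, pderiv_X, zero_mul, zero_add]
  rw [Finset.sum_eq_single i]
  · simp [Pi.single_apply]
  · intro j _ hj
    simp [Pi.single_apply, hj.symm]
  · simp

lemma pderiv_qpoly (i : Fin n) : pderiv i (qpoly n) = C 2 * X i := by
  simp only [qpoly, map_sum]
  rw [Finset.sum_eq_single i]
  · rw [pow_two, pderiv_mul, pderiv_X_self, map_ofNat]; ring
  · intro j _ hj
    rw [pow_two, pderiv_mul]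
    simp [pderiv_X, Pi.single_apply, hj]
  · simp

lemma pderiv_lin_pow (i : Fin n) (b : Fin n → ℂ) (m : ℕ) :
    pderiv i (linForm b ^ (m+1)) = C ((m:ℂ)+1) * linForm b ^ m * C (b i) := by
  induction m with
  | zero => simp [pderiv_linForm]
  | succ m ih =>
    rw [pow_succ, pderiv_mul, ih, pderiv_linForm]
    simp only [map_add, map_one, map_natCast]
    push_cast
    ring

lemma pderiv_q2 (i : Fin n) : pderiv i (qpoly n ^ 2) = C 4 * qpoly n * X i := by
  rw [pow_two, pderiv_mul, pderiv_qpoly]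
  simp only [map_ofNat]
  ring

lemma pderiv_q3 (i : Fin n) : pderiv i (qpoly n ^ 3) = C 6 * qpoly n ^ 2 * X i := by
  rw [pow_succ, pderiv_mul, pderiv_q2, pderiv_qpoly]
  simp only [map_ofNat]
  ring

lemma sumX2 : ∑ i : Fin n, (X i : R) * X i = qpoly n := by
  simp [qpoly, pow_two]

lemma lap_q3 : lap (qpoly n ^ 3) = C (6*((n:ℂ)+4)) * qpoly n ^ 2 := by
  show ∑ i : Fin n, pderiv i (pderiv i (qpoly n ^ 3)) = _
  have h : ∀ i : Fin n, pderiv i (pderiv i (qpoly n ^ 3)) =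
      C 24 * (X i * X i) * qpoly n + C 6 * qpoly n ^ 2 := by
    intro i
    rw [pderiv_q3, pderiv_mul, pderiv_mul, pderiv_q2, pderiv_C, pderiv_X_self]
    simp only [map_ofNat]
    ring
  rw [Finset.sum_congr rfl fun i _ => h i, Finset.sum_add_distrib, Finset.sum_const,
    Finset.card_univ, Fintype.card_fin, nsmul_eq_mul]
  have e1 : ∑ i : Fin n, C (24:ℂ) * (X i * X i) * qpoly n = C 24 * qpoly n * qpoly n := by
    calc ∑ i : Fin n, C (24:ℂ) * (X i * X i) * qpoly n
        = (∑ i : Fin n, (X i : R) * X i) * (C 24 * qpoly n) := by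
          rw [Finset.sum_mul]
          exact Finset.sum_congr rfl fun i _ => by ring
      _ = C 24 * qpoly n * qpoly n := by rw [sumX2]; ring
  rw [e1, show ((n : R)) = C ((n:ℂ)) by simp]
  simp only [map_mul, map_add, map_ofNat]
  ring

lemma lap_lin6 (b : Fin n → ℂ) :
    lap (linForm b ^ 6) = C (30 * dotC b b) * linForm b ^ 4 := by
  show ∑ i : Fin n, pderiv i (pderiv i (linForm b ^ 6)) = _
  have h : ∀ i : Fin n, pderiv i (pderiv i (linForm b ^ 6)) =
      C 30 * C (b i * b i) * linForm b ^ 4 := by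
    intro i
    have h6 : pderiv i (linForm b ^ 6) = C 6 * linForm b ^ 5 * C (b i) := by
      have h' := pderiv_lin_pow i b 5
      rw [show ((5:ℕ)+1) = 6 from rfl] at h'
      rw [h']; norm_num
    have h5 : pderiv i (linForm b ^ 5) = C 5 * linForm b ^ 4 * C (b i) := by
      have h' := pderiv_lin_pow i b 4
      rw [show ((4:ℕ)+1) = 5 from rfl] at h'
      rw [h']; norm_num
    rw [h6]
    simp only [pderiv_mul, h5, pderiv_C, map_mul]
    simp only [map_ofNat]
    ring
  rw [Finset.sum_congr rfl fun i _ => h i]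
  calc ∑ i : Fin n, C (30:ℂ) * C (b i * b i) * linForm b ^ 4
      = (∑ i : Fin n, C (b i * b i)) * (C 30 * linForm b ^ 4) := by
        rw [Finset.sum_mul]
        exact Finset.sum_congr rfl fun i _ => by ring
    _ = C (30 * dotC b b) * linForm b ^ 4 := by
        rw [← map_sum, show (∑ i : Fin n, b i * b i) = dotC b b from rfl, map_mul]
        simp only [map_ofNat]
        ring

lemma lap_sum {ι : Type*} (s : Finset ι) (f : ι → R) :
    lap (∑ k ∈ s, f k) = ∑ k ∈ s, lap (f k) := by
  show ∑ i : Fin n, _ = _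
  simp only [map_sum]
  rw [Finset.sum_comm]
  rfl

lemma Dop_sum {ι : Type*} (s : Finset ι) (b : Fin n → ℂ) (f : ι → R) :
    Dop b (∑ k ∈ s, f k) = ∑ k ∈ s, Dop b (f k) := by
  simp only [Dop, map_sum, Finset.mul_sum]
  rw [Finset.sum_comm]

lemma eval_linForm (v : Fin n → ℂ) (b : Fin n → ℂ) : eval v (linForm b) = dotC b v := by
  simp [linForm, dotC]

lemma eval_qpoly (v : Fin n → ℂ) : eval v (qpoly n) = dotC v v := by
  simp [qpoly, dotC, pow_two]

lemma linForm_add (b c : Fin n → ℂ) : linForm (b + c) = linForm b + linForm c := by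
  simp [linForm, add_mul, Finset.sum_add_distrib]

lemma linForm_single (i : Fin n) : linForm (Pi.single i (1:ℂ)) = X i := by
  simp only [linForm]
  rw [Finset.sum_eq_single i]
  · simp
  · intro j _ hj
    simp [Pi.single_apply, hj.symm]
  · simp

lemma cube_mem_span {M : Submodule ℂ R} (hM : ∀ b : Fin n → ℂ, linForm b ^ 3 ∈ M)
    (i j k : Fin n) : (X i : R) * X j * X k ∈ M := by
  have key : (6:ℂ) • ((X i : R) * X j * X k) =
      linForm (Pi.single i 1 + Pi.single j 1 + Pi.single k 1) ^ 3
      - linForm (Pi.single i 1 + Pi.single j 1) ^ 3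
      - linForm (Pi.single i 1 + Pi.single k 1) ^ 3
      - linForm (Pi.single j 1 + Pi.single k 1) ^ 3
      + linForm (Pi.single i 1) ^ 3 + linForm (Pi.single j 1) ^ 3
      + linForm (Pi.single k 1) ^ 3 := by
    simp only [linForm_add, linForm_single, smul_eq_C_mul]
    rw [show (C (6:ℂ) : R) = 6 from map_ofNat _ 6]
    ring
  have hmem : (6:ℂ) • ((X i : R) * X j * X k) ∈ M := by
    rw [key]
    refine Submodule.add_mem _ (Submodule.add_mem _ (Submodule.add_mem _
      (Submodule.sub_mem _ (Submodule.sub_mem _ (Submodule.sub_mem _ ?_ ?_) ?_) ?_) ?_) ?_) ?_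
    all_goals exact hM _
  have h6 : (6:ℂ) ≠ 0 := by norm_num
  have := M.smul_mem (6:ℂ)⁻¹ hmem
  rwa [smul_smul, inv_mul_cancel₀ h6, one_smul] at this

lemma two_choose (m : ℕ) : 2 * ((m+1).choose 2) = m * (m+1) := by
  induction m with
  | zero => rfl
  | succ m ih =>
    have h : (m+2).choose 2 = (m+1).choose 1 + (m+1).choose 2 := Nat.choose_succ_succ _ _
    calc 2 * ((m+2).choose 2) = 2*(m+1) + 2*((m+1).choose 2) := by
          rw [h, Nat.choose_one_right]; ring
      _ = 2*(m+1) + m*(m+1) := by rw [ih]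
      _ = (m+1) * (m+2) := by ring

lemma six_choose (m : ℕ) : 6 * ((m+2).choose 3) = m * (m+1) * (m+2) := by
  induction m with
  | zero => rfl
  | succ m ih =>
    have h : (m+3).choose 3 = (m+2).choose 2 + (m+2).choose 3 := Nat.choose_succ_succ _ _
    calc 6 * ((m+3).choose 3) = 3*(2*((m+1+1).choose 2)) + 6*((m+2).choose 3) := by
          rw [h]; ring
      _ = 3*((m+1)*(m+2)) + m*(m+1)*(m+2) := by rw [two_choose, ih]
      _ = (m+1)*(m+2)*(m+3) := by ring

lemma tripleX_eq (i j k : Fin n) :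
    monomial (Multiset.toFinsupp ({i, j, k} : Multiset (Fin n))) (1:ℂ)
      = (X i : R) * X j * X k := by
  have h : ({i, j, k} : Multiset (Fin n)) = {i} + ({j} + {k}) := by
    simp [Multiset.insert_eq_cons, ← Multiset.singleton_add]
  rw [h, Multiset.toFinsupp_add, Multiset.toFinsupp_add]
  simp only [Multiset.toFinsupp_singleton]
  rw [X, X, X, monomial_mul, monomial_mul, add_assoc, one_mul, one_mul]

end Tight

/-- If q_n^3 (n ≥ 2) admits a tight Waring decomposition into T_{n,3} sixth
powers of linear forms, then n ≡ 2 (mod 3). -/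
theorem tight_decomposition_cube_of_quadric (n : ℕ) (hn : 2 ≤ n)
    (a : Fin ((n + 2).choose 3) → Fin n → ℂ)
    (hdec : qpoly n ^ 3 = ∑ k, linForm (a k) ^ 6) :
    n % 3 = 2 := by
  classical
  have hn4 : ((n:ℂ)+4) ≠ 0 := by
    have h : ((n:ℂ)+4) = ((n+4 : ℕ) : ℂ) := by push_cast; ring
    rw [h]
    exact Nat.cast_ne_zero.mpr (by omega)
  have hn1 : ((n:ℂ)+1) ≠ 0 := by
    have h : ((n:ℂ)+1) = ((n+1 : ℕ) : ℂ) := by push_cast; ring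
    rw [h]
    exact Nat.cast_ne_zero.mpr (by omega)
  -- apply the Laplacian to the decomposition
  have P1 : C (6*((n:ℂ)+4)) * qpoly n ^ 2
      = ∑ k, C (30 * dotC (a k) (a k)) * linForm (a k) ^ 4 := by
    have h := congrArg lap hdec
    rw [Tight.lap_q3, Tight.lap_sum] at h
    rw [h]
    exact Finset.sum_congr rfl fun k _ => Tight.lap_lin6 (a k)
  -- the key identity : third directional derivatives of the decomposition
  have KEY : ∀ b : Fin n → ℂ, C (48*((n:ℂ)+4)) * linForm b ^ 3
      = ∑ k, C (120*(((n:ℂ)+4) * dotC b (a k) ^ 3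
          - 3 * dotC b b * dotC (a k) (a k) * dotC b (a k))) * linForm (a k) ^ 3 := by
    intro b
    have hR : Tight.Dop b (Tight.Dop b (Tight.Dop b (∑ k, linForm (a k) ^ 6)))
        = ∑ k, C (120 * dotC b (a k) ^ 3) * linForm (a k) ^ 3 := by
      rw [Tight.Dop_sum, Tight.Dop_sum, Tight.Dop_sum]
      exact Finset.sum_congr rfl fun k _ => Tight.Dop3_lin6 b (a k)
    have h1 : C 48 * linForm b ^ 3 + C (72 * dotC b b) * (qpoly n * linForm b)
        = ∑ k, C (120 * dotC b (a k) ^ 3) * linForm (a k) ^ 3 := by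
      have h' : Tight.Dop b (Tight.Dop b (Tight.Dop b (qpoly n ^3)))
          = Tight.Dop b (Tight.Dop b (Tight.Dop b (∑ k, linForm (a k) ^6))) := by
        rw [hdec]
      rw [Tight.Dop3_q3, hR] at h'
      exact h'
    have h2 : C (24*((n:ℂ)+4)) * (qpoly n * linForm b)
        = ∑ k, C (120 * dotC (a k) (a k) * dotC b (a k)) * linForm (a k) ^ 3 := by
      calc C (24*((n:ℂ)+4)) * (qpoly n * linForm b)
          = C (6*((n:ℂ)+4)) * (C 4 * (qpoly n * linForm b)) := by
            simp only [map_mul, map_ofNat]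
            ring
        _ = Tight.Dop b (C (6*((n:ℂ)+4)) * qpoly n ^ 2) := by
            rw [Tight.Dop_C_mul, Tight.Dop_q2]
        _ = Tight.Dop b (∑ k, C (30 * dotC (a k) (a k)) * linForm (a k) ^ 4) := by rw [P1]
        _ = ∑ k, C (120 * dotC (a k) (a k) * dotC b (a k)) * linForm (a k) ^ 3 := by
            rw [Tight.Dop_sum]
            refine Finset.sum_congr rfl fun k _ => ?_
            rw [Tight.Dop_C_mul, Tight.Dop_lin4, ← mul_assoc, ← map_mul]
            congr 2
            ring
    have hsplit : ∑ k, C (120*(((n:ℂ)+4) * dotC b (a k) ^ 3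
          - 3 * dotC b b * dotC (a k) (a k) * dotC b (a k))) * linForm (a k) ^ 3
        = C ((n:ℂ)+4) * (∑ k, C (120 * dotC b (a k) ^ 3) * linForm (a k) ^ 3)
          - C (3 * dotC b b)
            * (∑ k, C (120 * dotC (a k) (a k) * dotC b (a k)) * linForm (a k) ^ 3) := by
      rw [Finset.mul_sum, Finset.mul_sum, ← Finset.sum_sub_distrib]
      refine Finset.sum_congr rfl fun k _ => ?_
      simp only [map_mul, map_sub, map_add, map_ofNat]
      ring
    rw [hsplit, ← h1, ← h2]
    simp only [map_mul, map_add, map_ofNat]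
    ring
  -- span and linear independence of the cubes of the linear forms
  have hbmem : ∀ b : Fin n → ℂ,
      linForm b ^ 3 ∈ Submodule.span ℂ (Set.range fun k => linForm (a k) ^ 3) := by
    intro b
    have h48 : (48*((n:ℂ)+4)) ≠ 0 := mul_ne_zero (by norm_num) hn4
    have hmem : (48*((n:ℂ)+4)) • linForm b ^ 3
        ∈ Submodule.span ℂ (Set.range fun k => linForm (a k) ^ 3) := by
      rw [smul_eq_C_mul, KEY b]
      refine Submodule.sum_mem _ fun k _ => ?_
      rw [← smul_eq_C_mul]
      exact Submodule.smul_mem _ _ (Submodule.subset_span ⟨k, rfl⟩)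
    have h' := Submodule.smul_mem _ (48*((n:ℂ)+4))⁻¹ hmem
    rwa [smul_smul, inv_mul_cancel₀ h48, one_smul] at h'
  have hcardSym : Fintype.card (Sym (Fin n) 3) = (n+2).choose 3 := by
    rw [Sym.card_sym_eq_choose, Fintype.card_fin]
    norm_num
  have hφli : LinearIndependent ℂ
      (fun s : Sym (Fin n) 3 =>
        (monomial (Multiset.toFinsupp s.1) 1 : MvPolynomial (Fin n) ℂ)) := by
    have hinj : Function.Injective
        (fun s : Sym (Fin n) 3 => Multiset.toFinsupp s.1) :=
      fun s t h => Sym.coe_injective (Multiset.toFinsupp.injective h)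
    have h' := (MvPolynomial.basisMonomials (Fin n) ℂ).linearIndependent.comp _ hinj
    simpa [MvPolynomial.coe_basisMonomials, Function.comp_def] using h'
  have hφmem : ∀ s : Sym (Fin n) 3,
      (monomial (Multiset.toFinsupp s.1) 1 : MvPolynomial (Fin n) ℂ)
        ∈ Submodule.span ℂ (Set.range fun k => linForm (a k) ^ 3) := by
    intro s
    obtain ⟨i, j, k, hs⟩ := Multiset.card_eq_three.mp s.2
    rw [hs, Tight.tripleX_eq]
    exact Tight.cube_mem_span hbmem i j k
  have hfd : FiniteDimensional ℂ
      (Submodule.span ℂ (Set.range fun k => linForm (a k) ^ 3)) :=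
    FiniteDimensional.span_of_finite ℂ (Set.finite_range _)
  have hfr : (Set.range fun k => linForm (a k) ^ 3).finrank ℂ = (n+2).choose 3 := by
    apply le_antisymm
    · have h' := finrank_range_le_card (R := ℂ) (fun k : Fin ((n+2).choose 3) => linForm (a k) ^ 3)
      rwa [Fintype.card_fin] at h'
    · have h1 : Module.finrank ℂ (Submodule.span ℂ
          (Set.range fun s : Sym (Fin n) 3 =>
            (monomial (Multiset.toFinsupp s.1) 1 : MvPolynomial (Fin n) ℂ)))
          = (n+2).choose 3 := by
        rw [finrank_span_eq_card hφli, hcardSym]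
      have h2 : Submodule.span ℂ (Set.range fun s : Sym (Fin n) 3 =>
            (monomial (Multiset.toFinsupp s.1) 1 : MvPolynomial (Fin n) ℂ))
          ≤ Submodule.span ℂ (Set.range fun k => linForm (a k) ^ 3) :=
        Submodule.span_le.mpr (by rintro _ ⟨s, rfl⟩; exact hφmem s)
      calc (n+2).choose 3 = _ := h1.symm
        _ ≤ _ := Submodule.finrank_mono h2
  have hli : LinearIndependent ℂ (fun k => linForm (a k) ^ 3) :=
    linearIndependent_iff_card_eq_finrank_span.mpr (by rw [Fintype.card_fin, hfr])
  -- coefficient extraction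
  have hcoef : ∀ j k : Fin ((n+2).choose 3),
      120*(((n:ℂ)+4) * dotC (a j) (a k) ^ 3
        - 3 * dotC (a j) (a j) * dotC (a k) (a k) * dotC (a j) (a k))
        - (if k = j then 48*((n:ℂ)+4) else 0) = 0 := by
    intro j k
    have h0 : ∑ m, (120*(((n:ℂ)+4) * dotC (a j) (a m) ^ 3
        - 3 * dotC (a j) (a j) * dotC (a m) (a m) * dotC (a j) (a m))
        - (if m = j then 48*((n:ℂ)+4) else 0)) • (linForm (a m) ^ 3) = 0 := by
      simp only [sub_smul]
      rw [Finset.sum_sub_distrib]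
      have e1 : (∑ m, (120*(((n:ℂ)+4) * dotC (a j) (a m) ^ 3
          - 3 * dotC (a j) (a j) * dotC (a m) (a m) * dotC (a j) (a m)))
            • (linForm (a m) ^ 3))
          = C (48*((n:ℂ)+4)) * linForm (a j) ^ 3 := by
        simp only [smul_eq_C_mul]
        exact (KEY (a j)).symm
      have e2 : (∑ m, (if m = j then (48*((n:ℂ)+4)) else 0) • (linForm (a m) ^ 3))
          = C (48*((n:ℂ)+4)) * linForm (a j) ^ 3 := by
        rw [Finset.sum_eq_single j]
        · rw [if_pos rfl, smul_eq_C_mul]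
        · intro m _ hm
          rw [if_neg hm, zero_smul]
        · intro h
          exact absurd (Finset.mem_univ j) h
      rw [e1, e2, sub_self]
    exact Fintype.linearIndependent_iff.mp hli _ h0 k
  have R1 : ∀ j, 5*((n:ℂ)+1) * dotC (a j) (a j) ^ 3 = 2*((n:ℂ)+4) := by
    intro j
    have h := hcoef j j
    rw [if_pos rfl] at h
    linear_combination h / 24
  have R2 : ∀ j k, k ≠ j → ((n:ℂ)+4) * dotC (a j) (a k) ^ 3
      = 3 * dotC (a j) (a j) * dotC (a k) (a k) * dotC (a j) (a k) := by
    intro j k hkj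
    have h := hcoef j k
    rw [if_neg hkj] at h
    linear_combination h / 120
  -- second-order scalar identities
  have M2 : ∀ i j : Fin ((n+2).choose 3),
      6*((n:ℂ)+4) * (16 * dotC (a i) (a j) ^ 2 + 8 * dotC (a i) (a i) * dotC (a j) (a j))
      = ∑ k, 30 * dotC (a k) (a k)
          * (24 * dotC (a i) (a k) ^ 2 * dotC (a j) (a k) ^ 2) := by
    intro i j
    have h := congrArg (fun f => Tight.Dop (a j) (Tight.Dop (a j)
        (Tight.Dop (a i) (Tight.Dop (a i) f)))) P1
    simp only [Tight.Dop_sum, Tight.Dop_C_mul, Tight.Dop4_q2, Tight.Dop4_lin4] at h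
    simp only [← map_mul] at h
    rw [← map_sum] at h
    exact MvPolynomial.C_injective _ _ h
  -- evaluation of the decomposition at the nodes
  have S3 : ∀ j, dotC (a j) (a j) ^ 3 = ∑ k, dotC (a k) (a j) ^ 6 := by
    intro j
    have h := congrArg (eval (a j)) hdec
    simp only [map_pow, map_sum, Tight.eval_qpoly, Tight.eval_linForm] at h
    exact h
  have hBsymm : ∀ (v w : Fin n → ℂ), dotC v w = dotC w v := fun v w => by
    simp [dotC, mul_comm]
  have hrne : ∀ j, dotC (a j) (a j) ≠ 0 := by
    intro j hz
    have h := R1 j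
    rw [hz] at h
    have h2 : (2:ℂ)*((n:ℂ)+4) = 0 := by linear_combination -h
    rcases mul_eq_zero.mp h2 with h3 | h3
    · norm_num at h3
    · exact hn4 h3
  have hB2 : ∀ j k, k ≠ j → dotC (a j) (a k) ≠ 0 →
      ((n:ℂ)+4) * dotC (a j) (a k) ^ 2
        = 3 * dotC (a j) (a j) * dotC (a k) (a k) := by
    intro j k hkj hne
    apply mul_right_cancel₀ hne
    linear_combination R2 j k hkj
  -- dispose of n = 2 (where the conclusion holds trivially)
  by_cases hn2 : n = 2
  · omega
  have hn3 : 3 ≤ n := by omega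
  -- main case split : is there an "apolar" pair?
  by_cases hex : ∃ p q' : Fin ((n+2).choose 3), p ≠ q' ∧ dotC (a p) (a q') = 0
  · -- yes : count common neighbours
    obtain ⟨i, j, hij, hBij⟩ := hex
    have hterm : ∀ k, (5*((n:ℂ)+1)*((n:ℂ)+4)^2)
        * (30 * dotC (a k) (a k) * (24 * dotC (a i) (a k) ^ 2 * dotC (a j) (a k) ^ 2))
        = if dotC (a i) (a k) ≠ 0 ∧ dotC (a j) (a k) ≠ 0 then
            12960*((n:ℂ)+4) * (dotC (a i) (a i) * dotC (a j) (a j)) else 0 := by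
      intro k
      by_cases hk : dotC (a i) (a k) ≠ 0 ∧ dotC (a j) (a k) ≠ 0
      · rw [if_pos hk]
        obtain ⟨hik, hjk⟩ := hk
        have hki : k ≠ i := by
          rintro rfl
          exact hjk ((hBsymm (a j) (a k)).trans hBij)
        have hkj : k ≠ j := by
          rintro rfl
          exact hik hBij
        have X := hB2 i k hki hik
        have Y := hB2 j k hkj hjk
        have Z := R1 k
        linear_combination (3600*((n:ℂ)+1)*dotC (a k) (a k)*((n:ℂ)+4)*dotC (a j) (a k)^2) * X
          + (10800*((n:ℂ)+1)*dotC (a k) (a k)^2*dotC (a i) (a i)) * Y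
          + (6480*dotC (a i) (a i)*dotC (a j) (a j)) * Z
      · rw [if_neg hk]
        rcases not_and_or.mp hk with h0 | h0 <;>
        · rw [not_not] at h0
          rw [h0]
          ring
    set μ := (Finset.univ.filter fun k : Fin ((n+2).choose 3) =>
        dotC (a i) (a k) ≠ 0 ∧ dotC (a j) (a k) ≠ 0).card with hμ
    have hsum : (5*((n:ℂ)+1)*((n:ℂ)+4)^2)
        * (∑ k, 30 * dotC (a k) (a k)
            * (24 * dotC (a i) (a k) ^ 2 * dotC (a j) (a k) ^ 2))
        = (μ:ℂ) * (12960*((n:ℂ)+4) * (dotC (a i) (a i) * dotC (a j) (a j))) := by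
      rw [Finset.mul_sum]
      rw [Finset.sum_congr rfl fun k _ => hterm k]
      rw [Finset.sum_ite, Finset.sum_const, Finset.sum_const_zero, add_zero, nsmul_eq_mul,
        hμ]
    have hrr : dotC (a i) (a i) * dotC (a j) (a j) ≠ 0 := mul_ne_zero (hrne i) (hrne j)
    have hfinale : 5*((n:ℂ)+1)*((n:ℂ)+4)^2 = 270 * (μ:ℂ) := by
      have hM := M2 i j
      apply mul_left_cancel₀ (show (48*((n:ℂ)+4)*(dotC (a i) (a i) * dotC (a j) (a j))) ≠ 0
        from mul_ne_zero (mul_ne_zero (by norm_num) hn4) hrr)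
      linear_combination (5*((n:ℂ)+1)*((n:ℂ)+4)^2) * hM + hsum
        - (480*((n:ℂ)+1)*((n:ℂ)+4)^3*dotC (a i) (a j)) * hBij
    have hNat : 5*(n+1)*(n+4)^2 = 270 * μ := by
      have hc : ((5*(n+1)*(n+4)^2 : ℕ) : ℂ) = ((270 * μ : ℕ) : ℂ) := by
        push_cast
        linear_combination hfinale
      exact_mod_cast hc
    have key3 : 5*((n:ZMod 3)+1)*((n:ZMod 3)+4)^2 = 0 := by
      have hc := congrArg (fun m : ℕ => (m : ZMod 3)) hNat
      push_cast at hc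
      rw [hc]
      rw [show ((270:ZMod 3)) = 0 by decide]
      ring
    have hmod : (n : ZMod 3) = ((n % 3 : ℕ) : ZMod 3) := by
      conv_lhs => rw [← Nat.div_add_mod n 3]
      push_cast
      rw [show ((3:ZMod 3)) = 0 by decide]
      ring
    have h3cases : n % 3 = 0 ∨ n % 3 = 1 ∨ n % 3 = 2 := by omega
    rcases h3cases with h0 | h0 | h0
    · exfalso
      rw [hmod, h0] at key3
      simp only [Nat.cast_zero] at key3
      exact absurd key3 (by decide)
    · exfalso
      rw [hmod, h0] at key3
      simp only [Nat.cast_one] at key3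
      exact absurd key3 (by decide)
    · exact h0
  · -- no : every pair is non-apolar, contradiction with the count
    push_neg at hex
    have hTpos : 0 < (n+2).choose 3 := Nat.choose_pos (by omega)
    have h1T : 1 ≤ (n+2).choose 3 := hTpos
    set j : Fin ((n+2).choose 3) := ⟨0, hTpos⟩ with hj
    have hterm2 : ∀ k, k ≠ j → (25*((n:ℂ)+1)^2*((n:ℂ)+4)^3) * dotC (a k) (a j) ^ 6
        = 108*((n:ℂ)+4)^2 := by
      intro k hkj
      have hne : dotC (a k) (a j) ≠ 0 := hex k j hkj
      have X := hB2 k j (fun h => hkj h.symm) hne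
      have Zk := R1 k
      have Zj := R1 j
      linear_combination (25*((n:ℂ)+1)^2*((((n:ℂ)+4) * dotC (a k) (a j) ^ 2)^2
          + (((n:ℂ)+4) * dotC (a k) (a j) ^ 2)*(3 * dotC (a k) (a k) * dotC (a j) (a j))
          + 9 * dotC (a k) (a k)^2 * dotC (a j) (a j)^2)) * X
        + (27*5*((n:ℂ)+1)*dotC (a j) (a j)^3) * Zk
        + (54*((n:ℂ)+4)) * Zj
    have hsum2 : (25*((n:ℂ)+1)^2*((n:ℂ)+4)^3) * (∑ k, dotC (a k) (a j) ^ 6)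
        = 108*((n:ℂ)+4)^2 * (((n+2).choose 3 - 1 : ℕ) : ℂ)
          + (25*((n:ℂ)+1)^2*((n:ℂ)+4)^3) * dotC (a j) (a j) ^ 6 := by
      rw [← Finset.sum_erase_add _ _ (Finset.mem_univ j), mul_add]
      congr 1
      · rw [Finset.mul_sum]
        rw [Finset.sum_congr rfl fun k hk => hterm2 k (Finset.ne_of_mem_erase hk)]
        rw [Finset.sum_const, Finset.card_erase_of_mem (Finset.mem_univ j),
          Finset.card_univ, Fintype.card_fin, nsmul_eq_mul]
        ring
    have hfinal2 : 10*((n:ℂ)+1)*((n:ℂ)+4)^4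
        = 4*((n:ℂ)+4)^5 + 108*((n:ℂ)+4)^2 * (((n+2).choose 3 - 1 : ℕ) : ℂ) := by
      have hS := S3 j
      have Zj := R1 j
      linear_combination (25*((n:ℂ)+1)^2*((n:ℂ)+4)^3) * hS + hsum2
        + (((n:ℂ)+4)^3*(5*((n:ℂ)+1)*dotC (a j) (a j)^3 + 2*((n:ℂ)+4))
            - 5*((n:ℂ)+1)*((n:ℂ)+4)^3) * Zj
    have hNat2 : 10*(n+1)*(n+4)^4 = 4*(n+4)^5 + 108*(n+4)^2*((n+2).choose 3 - 1) := by
      have hc : ((10*(n+1)*(n+4)^4 : ℕ) : ℂ)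
          = ((4*(n+4)^5 + 108*(n+4)^2*((n+2).choose 3 - 1) : ℕ) : ℂ) := by
        push_cast
        linear_combination hfinal2
      exact_mod_cast hc
    exfalso
    have hsix := Tight.six_choose n
    -- move to ℤ
    have hNat2Z : (10*((n:ℤ)+1)*((n:ℤ)+4)^4 : ℤ)
        = 4*((n:ℤ)+4)^5 + 108*((n:ℤ)+4)^2*(((n+2).choose 3 : ℤ) - 1) := by
      have := congrArg (fun m : ℕ => (m : ℤ)) hNat2
      push_cast [Nat.cast_sub h1T] at this
      linear_combination this
    have hs6 : (6:ℤ) * (((n+2).choose 3 : ℤ) - 1) = (n:ℤ)*((n:ℤ)+1)*((n:ℤ)+2) - 6 := by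
      have := congrArg (fun m : ℕ => (m : ℤ)) hsix
      push_cast at this
      linear_combination this
    have hzero : (12:ℤ)*((n:ℤ)+4)^2*((n:ℤ)^3+(n:ℤ)^2-(n:ℤ)-1) = 0 := by
      linear_combination (-1 : ℤ)*hNat2Z - 18*((n:ℤ)+4)^2*hs6
    have hpos : (0:ℤ) < 12*((n:ℤ)+4)^2*((n:ℤ)^3+(n:ℤ)^2-(n:ℤ)-1) := by
      have h3 : (3:ℤ) ≤ (n:ℤ) := by exact_mod_cast hn3
      have h1 : (0:ℤ) < ((n:ℤ)+4)^2 := by positivity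
      have h2 : (0:ℤ) < (n:ℤ)^3+(n:ℤ)^2-(n:ℤ)-1 := by nlinarith
      positivity
    omega
end

section
/- For every integer s ≥ 1, the Waring rank of the s-th power of the binary quadratic form q_2 = X_1^2 + X_2^2 equals s+1: rk(q_2^s) = s+1. -/
open MvPolynomial

noncomputable def waringRank (n d : ℕ) (f : MvPolynomial (Fin n) ℂ) : ℕ :=
  sInf {r : ℕ | ∃ a : Fin r → Fin n → ℂ, f = ∑ k : Fin r, linForm (a k) ^ d}

section Auxiliary

open Finset Complex

lemma linForm_two (a : Fin 2 → ℂ) : linForm a = C (a 0) * X 0 + C (a 1) * X 1 := by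
  simp [linForm, Fin.sum_univ_two]

lemma pow_lin (a b : ℂ) (n : ℕ) :
    (C a * X 0 + C b * X 1 : MvPolynomial (Fin 2) ℂ) ^ n
      = ∑ j ∈ range (n+1),
          C ((n.choose j : ℂ) * a ^ j * b ^ (n - j)) * (X 0) ^ j * (X 1) ^ (n - j) := by
  rw [add_pow]
  refine Finset.sum_congr rfl fun j hj => ?_
  simp only [mul_pow, ← C_pow, map_mul, ← C_eq_coe_nat]
  ring

noncomputable def mon (j m : ℕ) : Fin 2 →₀ ℕ := Finsupp.single 0 j + Finsupp.single 1 m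

lemma mon_eq_iff {j m t u : ℕ} : mon j m = mon t u ↔ j = t ∧ m = u := by
  constructor
  · intro h
    have h0 : mon j m 0 = mon t u 0 := by rw [h]
    have h1 : mon j m 1 = mon t u 1 := by rw [h]
    simp [mon, Finsupp.single_apply] at h0 h1
    exact ⟨h0, h1⟩
  · rintro ⟨rfl, rfl⟩; rfl

lemma coeff_XX (t u j m : ℕ) :
    coeff (mon t u) ((X 0 : MvPolynomial (Fin 2) ℂ) ^ j * X 1 ^ m)
      = if j = t ∧ m = u then 1 else 0 := by
  rw [X_pow_eq_monomial, X_pow_eq_monomial, monomial_mul, coeff_monomial, mul_one]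
  rw [show (Finsupp.single 0 j + Finsupp.single 1 m) = mon j m from rfl]
  by_cases h : j = t ∧ m = u
  · simp [mon_eq_iff, h]
  · simp [mon_eq_iff, h]

set_option maxHeartbeats 1000000 in
lemma key_sum (s : ℕ) (hs : 1 ≤ s) : ∃ c d : Fin (s+1) → ℂ, ∀ j ≤ 2*s,
    ((2*s).choose j : ℂ) * ∑ k : Fin (s+1), (c k)^j * (d k)^(2*s-j)
      = if j = s then 1 else 0 := by
  obtain ⟨ζ, hζ⟩ : ∃ ζ : ℂ, IsPrimitiveRoot ζ (s+1) :=
    ⟨_, Complex.isPrimitiveRoot_exp (s+1) (Nat.succ_ne_zero s)⟩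
  have hζ0 : ζ ≠ 0 := hζ.ne_zero (Nat.succ_ne_zero s)
  have h2s : (0:ℕ) < 2*s := by omega
  obtain ⟨lam, hlam⟩ := IsAlgClosed.exists_pow_nat_eq ((((s:ℂ)+1) * ((2*s).choose s : ℂ))⁻¹) h2s
  have hmu : ∀ k : Fin (s+1), ∃ mu : ℂ, mu ^ (2*s) = ((ζ^s)⁻¹)^(k:ℕ) := fun k =>
    IsAlgClosed.exists_pow_nat_eq _ h2s
  choose mu hmu using hmu
  refine ⟨fun k => lam * mu k, fun k => lam * mu k * ζ^(k:ℕ), fun j hj => ?_⟩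
  have hterm : ∀ k : Fin (s+1),
      (lam * mu k)^j * (lam * mu k * ζ^(k:ℕ))^(2*s-j)
        = lam^(2*s) * (ζ^(2*s-j) * (ζ^s)⁻¹)^(k:ℕ) := by
    intro k
    have hjj : j + (2*s - j) = 2*s := by omega
    rw [mul_pow, mul_pow, mul_pow]
    rw [show lam^j * mu k ^ j * (lam^(2*s-j) * mu k ^(2*s-j) * (ζ^(k:ℕ))^(2*s-j))
        = (lam^j * lam^(2*s-j)) * (mu k ^ j * mu k ^ (2*s-j)) * (ζ^(k:ℕ))^(2*s-j) by ring]
    rw [← pow_add, ← pow_add, hjj, hmu k, mul_pow, ← pow_mul, ← pow_mul,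
      mul_comm (k:ℕ) (2*s-j), pow_mul]
    ring
  rw [Finset.sum_congr rfl (fun k _ => hterm k), ← Finset.mul_sum]
  set w : ℂ := ζ^(2*s-j) * (ζ^s)⁻¹ with hw
  have hwpow : w ^ (s+1) = 1 := by
    rw [hw, mul_pow, ← pow_mul, ← inv_pow, ← pow_mul,
      show (2*s-j)*(s+1) = (s+1)*(2*s-j) by ring, show s*(s+1) = (s+1)*s by ring,
      pow_mul, pow_mul, hζ.pow_eq_one]
    simp [hζ.pow_eq_one]
  have hsum : ∑ k : Fin (s+1), w ^ (k:ℕ) = ∑ k ∈ range (s+1), w ^ k :=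
    Fin.sum_univ_eq_sum_range (fun k => w ^ k) (s+1)
  by_cases hjs : j = s
  · have hw1 : w = 1 := by
      rw [hw, hjs, show 2*s - s = s by omega, mul_inv_cancel₀ (pow_ne_zero _ hζ0)]
    rw [hjs, hsum, hw1]
    simp only [one_pow, Finset.sum_const, card_range, nsmul_eq_mul, mul_one]
    rw [hlam]
    have hb : (((2*s).choose s : ℂ)) ≠ 0 := by
      exact_mod_cast (Nat.choose_pos (show s ≤ 2*s by omega)).ne'
    have hs0 : ((s:ℂ)+1) ≠ 0 := by
      exact_mod_cast (Nat.cast_add_one_ne_zero (R := ℂ) s)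
    simp only [if_true]
    field_simp
    push_cast
    ring
  · have hwne : w ≠ 1 := by
      intro h1
      have heq : ζ^(2*s-j) = ζ^s := by
        rw [hw, mul_inv_eq_one₀ (pow_ne_zero _ hζ0)] at h1
        exact h1
      rcases le_or_gt j s with hle | hlt
      · have h0 : ζ^(2*s-j-s) * ζ^s = ζ^s := by
          rw [← pow_add, show 2*s-j-s + s = 2*s-j by omega, heq]
        nth_rewrite 2 [show ζ^s = 1 * ζ^s by ring] at h0
        have h2 : ζ^(s-j) = 1 := by
          have := mul_right_cancel₀ (pow_ne_zero _ hζ0) h0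
          rwa [show 2*s-j-s = s-j by omega] at this
        have := (Nat.le_of_dvd (by omega) ((hζ.pow_eq_one_iff_dvd _).mp h2))
        omega
      · have h0 : ζ^(j-s) * ζ^(2*s-j) = 1 * ζ^(2*s-j) := by
          rw [← pow_add, show j-s + (2*s-j) = s by omega, heq.symm, one_mul]
        have h2 : ζ^(j-s) = 1 := mul_right_cancel₀ (pow_ne_zero _ hζ0) h0
        have := Nat.le_of_dvd (by omega) ((hζ.pow_eq_one_iff_dvd _).mp h2)
        omega
    rw [hsum, geom_sum_eq hwne, hwpow]
    simp [hjs]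

lemma mono_decomp (s : ℕ) (hs : 1 ≤ s) : ∃ b : Fin (s+1) → Fin 2 → ℂ,
    (X 0 : MvPolynomial (Fin 2) ℂ)^s * (X 1)^s
      = ∑ k : Fin (s+1), linForm (b k) ^ (2*s) := by
  obtain ⟨c, d, hcd⟩ := key_sum s hs
  refine ⟨fun k => ![c k, d k], ?_⟩
  have h1 : ∀ k : Fin (s+1), linForm ![c k, d k] ^ (2*s)
      = ∑ j ∈ range (2*s+1),
          C (((2*s).choose j : ℂ) * (c k) ^ j * (d k) ^ (2*s - j)) * (X 0) ^ j * (X 1) ^ (2*s - j) := by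
    intro k
    rw [linForm_two]
    simp only [Matrix.cons_val_zero, Matrix.cons_val_one, Matrix.head_cons]
    exact pow_lin (c k) (d k) (2*s)
  rw [Finset.sum_congr rfl fun k _ => h1 k, Finset.sum_comm]
  have h2 : ∀ j : ℕ,
      (∑ k : Fin (s+1),
        C (((2*s).choose j : ℂ) * (c k) ^ j * (d k) ^ (2*s - j)) * (X 0 : MvPolynomial (Fin 2) ℂ) ^ j * (X 1) ^ (2*s - j))
      = C (if j = s then (1:ℂ) else 0) * ((X 0) ^ j * (X 1) ^ (2*s - j)) := by
    intro j
    rw [← Finset.sum_mul, ← Finset.sum_mul, mul_assoc, ← map_sum]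
    by_cases hj' : j ≤ 2*s
    · rw [← hcd j hj', Finset.mul_sum]
      exact congrArg (· * (X 0 ^ j * X 1 ^ (2*s-j))) <| congrArg C <|
        Finset.sum_congr rfl fun k _ => by ring
    · have hch : (2*s).choose j = 0 := Nat.choose_eq_zero_of_lt (by omega)
      have hjs : j ≠ s := by omega
      rw [if_neg hjs, hch]
      simp
  simp only [h2]
  rw [Finset.sum_eq_single_of_mem s (Finset.mem_range.mpr (by omega))
    (fun j _ hne => by rw [if_neg hne]; simp)]
  rw [if_pos rfl, map_one, one_mul, show 2*s - s = s from by omega]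

lemma aeval_linForm (g : Fin 2 → ℂ) (p q r t : ℂ) :
    aeval ![C p * X 0 + C q * X 1, C r * X 0 + C t * X 1] (linForm g)
      = linForm ![g 0 * p + g 1 * r, g 0 * q + g 1 * t] := by
  rw [linForm_two, linForm_two]
  simp only [map_add, map_mul, aeval_X, aeval_C, Matrix.cons_val_zero, Matrix.cons_val_one,
    Matrix.head_cons, algebraMap_eq, map_add, map_mul]
  ring

lemma qpoly_two : qpoly 2 = X 0 ^ 2 + X 1 ^ 2 := by
  simp [qpoly, Fin.sum_univ_two]

lemma prod_uv : ((C 1 * X 0 + C I * X 1) : MvPolynomial (Fin 2) ℂ)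
    * (C 1 * X 0 + C (-I) * X 1) = qpoly 2 := by
  rw [qpoly_two]
  have h : (I : ℂ) * (-I) = 1 := by
    rw [mul_neg, Complex.I_mul_I]; ring
  rw [show ((C 1 * X 0 + C I * X 1) : MvPolynomial (Fin 2) ℂ) * (C 1 * X 0 + C (-I) * X 1)
      = C (1*1) * X 0 ^ 2 + C (I * (-I)) * X 1 ^ 2 + C (1 * (-I) + I * 1) * (X 0 * X 1) by
    simp only [map_mul, map_add]; ring]
  rw [h]
  simp

lemma prod_half : ((C (1/2) * X 0 + C (1/2) * X 1) : MvPolynomial (Fin 2) ℂ) ^ 2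
    + (C (-I/2) * X 0 + C (I/2) * X 1) ^ 2 = X 0 * X 1 := by
  rw [show ((C (1/2) * X 0 + C (1/2) * X 1) : MvPolynomial (Fin 2) ℂ) ^ 2
      + (C (-I/2) * X 0 + C (I/2) * X 1) ^ 2
      = C ((1/2)^2 + (-I/2)^2) * X 0 ^ 2 + C ((1/2)^2 + (I/2)^2) * X 1 ^ 2
        + C (2*((1/2)*(1/2)) + 2*((-I/2)*(I/2))) * (X 0 * X 1) by
    simp only [map_mul, map_add, map_pow, map_ofNat]
    ring]
  have e1 : ((1:ℂ)/2)^2 + (-I/2)^2 = 0 := by field_simp; rw [Complex.I_sq]; norm_num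
  have e2 : ((1:ℂ)/2)^2 + (I/2)^2 = 0 := by field_simp; rw [Complex.I_sq]; norm_num
  have e3 : (2*((1/2:ℂ)*(1/2)) + 2*((-I/2)*(I/2))) = 1 := by field_simp; rw [Complex.I_sq]; norm_num
  rw [e1, e2, e3]
  simp

lemma exists_ann (s r : ℕ) (hr : r ≤ s) (α β : Fin r → ℂ) :
    ∃ c : Fin (s+1) → ℂ, c ≠ 0 ∧
      ∀ k, ∑ t : Fin (s+1), c t * (α k)^(t:ℕ) * (β k)^(s - (t:ℕ)) = 0 := by
  set M : Matrix (Fin r) (Fin (s+1)) ℂ := fun k t => α k ^ (t:ℕ) * β k ^ (s - (t:ℕ)) with hM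
  have hni : ¬ Function.Injective M.mulVecLin := by
    intro hinj
    have h1 := LinearMap.finrank_le_finrank_of_injective hinj
    simp [Module.finrank_pi] at h1
    omega
  rw [Function.not_injective_iff] at hni
  obtain ⟨x, y, hxy, hne⟩ := hni
  refine ⟨x - y, sub_ne_zero.mpr hne, fun k => ?_⟩
  have h0 : M.mulVecLin (x - y) = 0 := by
    rw [map_sub, hxy, sub_self]
  have h0k : M.mulVec (x - y) k = 0 := congrFun h0 k
  rw [Matrix.mulVec, dotProduct] at h0k
  rw [← h0k]
  refine Finset.sum_congr rfl fun t _ => by rw [hM]; ring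

lemma moments (s r : ℕ) (a : Fin r → Fin 2 → ℂ)
    (h : (X 0 : MvPolynomial (Fin 2) ℂ)^s * X 1^s = ∑ k : Fin r, linForm (a k) ^ (2*s)) :
    ∀ t, t ≤ 2*s →
      ((2*s).choose t : ℂ) * (∑ k : Fin r, (a k 0)^t * (a k 1)^(2*s-t))
        = if t = s then 1 else 0 := by
  intro t ht
  have hc := congrArg (coeff (mon t (2*s-t))) h
  rw [coeff_XX] at hc
  rw [coeff_sum] at hc
  have hterm : ∀ k : Fin r,
      coeff (mon t (2*s-t)) (linForm (a k) ^ (2*s))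
        = ((2*s).choose t : ℂ) * (a k 0)^t * (a k 1)^(2*s-t) := by
    intro k
    rw [linForm_two, pow_lin, coeff_sum]
    rw [Finset.sum_eq_single_of_mem t (Finset.mem_range.mpr (by omega))
      (fun j hj hne => ?_)]
    · rw [mul_assoc, coeff_C_mul, coeff_XX, if_pos ⟨rfl, rfl⟩, mul_one]
    · rw [mul_assoc, coeff_C_mul, coeff_XX, if_neg, mul_zero]
      rintro ⟨rfl, -⟩; exact hne rfl
  rw [Finset.sum_congr rfl fun k _ => hterm k] at hc
  have hif : (if s = t ∧ s = 2*s-t then (1:ℂ) else 0) = if t = s then 1 else 0 := by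
    by_cases hts : t = s
    · subst hts; rw [if_pos ⟨rfl, by omega⟩, if_pos rfl]
    · rw [if_neg (fun ⟨h1, _⟩ => hts h1.symm), if_neg hts]
  rw [Finset.mul_sum, ← hif, hc]
  exact Finset.sum_congr rfl fun k _ => by ring

end Auxiliary

/-- For every s ≥ 1, the Waring rank of q_2^s equals s + 1. -/
theorem waringRank_power_of_binary_quadric (s : ℕ) (hs : 1 ≤ s) :
    waringRank 2 (2 * s) (qpoly 2 ^ s) = s + 1 := by
  open Finset Complex in
  have hmem : ∃ a : Fin (s+1) → Fin 2 → ℂ, qpoly 2 ^ s = ∑ k : Fin (s+1), linForm (a k) ^ (2*s) := by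
    obtain ⟨b, hb⟩ := mono_decomp s hs
    refine ⟨fun k => ![b k 0 * 1 + b k 1 * 1, b k 0 * I + b k 1 * (-I)], ?_⟩
    have happ := congrArg (aeval (![C 1 * X 0 + C I * X 1, C 1 * X 0 + C (-I) * X 1] :
      Fin 2 → MvPolynomial (Fin 2) ℂ)) hb
    rw [map_mul, map_pow, map_pow, aeval_X, aeval_X] at happ
    simp only [Matrix.cons_val_zero, Matrix.cons_val_one, Matrix.head_cons] at happ
    rw [← mul_pow, prod_uv, map_sum] at happ
    rw [happ]
    exact Finset.sum_congr rfl fun k _ => by rw [map_pow, aeval_linForm]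
  open Finset Complex in
  have hlow : ∀ r : ℕ, r ≤ s →
      ¬ ∃ a : Fin r → Fin 2 → ℂ, qpoly 2 ^ s = ∑ k : Fin r, linForm (a k) ^ (2*s) := by
    rintro r hr ⟨a, ha⟩
    set a' : Fin r → Fin 2 → ℂ :=
      fun k => ![a k 0 * (1/2) + a k 1 * (-I/2), a k 0 * (1/2) + a k 1 * (I/2)] with ha'
    have h' : (X 0 : MvPolynomial (Fin 2) ℂ)^s * X 1^s = ∑ k : Fin r, linForm (a' k) ^ (2*s) := by
      have happ := congrArg
        (aeval (![C (1/2) * X 0 + C (1/2) * X 1, C (-I/2) * X 0 + C (I/2) * X 1] :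
          Fin 2 → MvPolynomial (Fin 2) ℂ)) ha
      rw [map_pow, qpoly_two, map_add, map_pow, map_pow, aeval_X, aeval_X] at happ
      simp only [Matrix.cons_val_zero, Matrix.cons_val_one, Matrix.head_cons] at happ
      rw [prod_half, mul_pow, map_sum] at happ
      rw [happ]
      exact Finset.sum_congr rfl fun k _ => by rw [map_pow, aeval_linForm]
    have hmom := moments s r a' h'
    obtain ⟨c, hc0, hann⟩ := exists_ann s r hr (fun k => a' k 0) (fun k => a' k 1)
    obtain ⟨t0, ht0⟩ := Function.ne_iff.mp hc0
    have ht0s : (t0 : ℕ) ≤ s := by omega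
    set i : ℕ := s - (t0 : ℕ) with hi
    have hmq : ∀ q, q ≤ 2*s → q ≠ s →
        (∑ k : Fin r, (a' k 0)^q * (a' k 1)^(2*s-q)) = 0 := by
      intro q hq hqs
      have h1 := hmom q hq
      rw [if_neg hqs] at h1
      have hch : ((2*s).choose q : ℂ) ≠ 0 := by
        exact_mod_cast (Nat.choose_pos hq).ne'
      exact (mul_eq_zero.mp h1).resolve_left hch
    have hzero : ∑ k : Fin r, (a' k 0)^i * (a' k 1)^(s-i)
        * (∑ t : Fin (s+1), c t * (a' k 0)^(t:ℕ) * (a' k 1)^(s-(t:ℕ))) = 0 :=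
      Finset.sum_eq_zero fun k _ => by rw [hann k, mul_zero]
    have hexp : ∀ k : Fin r, (a' k 0)^i * (a' k 1)^(s-i)
        * (∑ t : Fin (s+1), c t * (a' k 0)^(t:ℕ) * (a' k 1)^(s-(t:ℕ)))
        = ∑ t : Fin (s+1), c t * ((a' k 0)^(i+(t:ℕ)) * (a' k 1)^(2*s-(i+(t:ℕ)))) := by
      intro k
      rw [Finset.mul_sum]
      refine Finset.sum_congr rfl fun t _ => ?_
      have h2 : (t:ℕ) ≤ s := by omega
      rw [pow_add, show 2*s-(i+(t:ℕ)) = (s-i)+(s-(t:ℕ)) by omega, pow_add]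
      ring
    rw [Finset.sum_congr rfl fun k _ => hexp k] at hzero
    rw [Finset.sum_comm] at hzero
    have hsplit : ∀ t : Fin (s+1),
        (∑ k : Fin r, c t * ((a' k 0)^(i+(t:ℕ)) * (a' k 1)^(2*s-(i+(t:ℕ)))))
        = c t * (∑ k : Fin r, (a' k 0)^(i+(t:ℕ)) * (a' k 1)^(2*s-(i+(t:ℕ)))) := by
      intro t; rw [Finset.mul_sum]
    rw [Finset.sum_congr rfl fun t _ => hsplit t] at hzero
    rw [Finset.sum_eq_single_of_mem t0 (Finset.mem_univ _)
      (fun t _ hne => ?_)] at hzero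
    · have hit0 : i + (t0:ℕ) = s := by omega
      rw [hit0] at hzero
      have hms := hmom s (by omega)
      rw [if_pos rfl] at hms
      have hct0 : c t0 ≠ 0 := by simpa using ht0
      have hzs : (∑ k : Fin r, (a' k 0)^s * (a' k 1)^(2*s-s)) = 0 :=
        (mul_eq_zero.mp hzero).resolve_left hct0
      rw [hzs, mul_zero] at hms
      exact one_ne_zero hms.symm
    · have ht : (t:ℕ) ≤ s := by omega
      have hne' : i + (t:ℕ) ≠ s := by
        intro hE
        exact hne (Fin.ext (by omega))
      rw [hmq (i+(t:ℕ)) (by omega) hne', mul_zero]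
  have key : ∀ S : Set ℕ, S = {r : ℕ | ∃ a : Fin r → Fin 2 → ℂ,
      qpoly 2 ^ s = ∑ k : Fin r, linForm (a k) ^ (2*s)} → sInf S = s + 1 := by
    intro S hS
    have hub : sInf S ≤ s + 1 := Nat.sInf_le (by rw [hS]; exact hmem)
    have hSne : S.Nonempty := ⟨s+1, by rw [hS]; exact hmem⟩
    have hmemInf := Nat.sInf_mem hSne
    nth_rewrite 1 [hS] at hmemInf
    obtain ⟨a, ha⟩ := hmemInf
    by_contra hne
    have hle : sInf S ≤ s := by omega
    exact hlow (sInf S) hle ⟨a, ha⟩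
  exact key _ rfl
end

section
/- Let a_1, a_2, a_3, a_4 ∈ ℂ³ be four pairwise distinct unitary points (a_j·a_j = 1), and suppose there is a value a ∈ ℂ such that (a_j·a_k)^2 = a^2 for all 1 ≤ j < k ≤ 4. Then a^2 ∈ {1/9, 1/5, 1}. -/
open MvPolynomial

private lemma gram_keyA (a : ℂ) (h : (1+3*a)*(1-a)^3 = 0) :
    a ^ 2 = 1 / 9 ∨ a ^ 2 = 1 / 5 ∨ a ^ 2 = 1 := by
  rcases mul_eq_zero.mp h with h | h
  · left
    have ha : a = -(1/3) := by linear_combination (1/3) * h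
    rw [ha]; norm_num
  · right; right
    have h3 : (1 - a) = 0 := pow_eq_zero_iff (n := 3) (by norm_num) |>.mp h
    have ha : a = 1 := by linear_combination -h3
    rw [ha]; norm_num

private lemma gram_keyC (a : ℂ) (h : (1-3*a)*(1+a)^3 = 0) :
    a ^ 2 = 1 / 9 ∨ a ^ 2 = 1 / 5 ∨ a ^ 2 = 1 := by
  rcases mul_eq_zero.mp h with h | h
  · left
    have ha : a = 1/3 := by linear_combination -(1/3) * h
    rw [ha]; norm_num
  · right; right
    have h3 : (1 + a) = 0 := pow_eq_zero_iff (n := 3) (by norm_num) |>.mp h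
    have ha : a = -1 := by linear_combination h3
    rw [ha]; norm_num

private lemma gram_keyB (a : ℂ) (h : (1-a^2)*(1-5*a^2) = 0) :
    a ^ 2 = 1 / 9 ∨ a ^ 2 = 1 / 5 ∨ a ^ 2 = 1 := by
  rcases mul_eq_zero.mp h with h | h
  · right; right; linear_combination -h
  · right; left; linear_combination -(1/5) * h

set_option maxHeartbeats 2000000 in
/-- If a₁,…,a₄ ∈ ℂ³ are pairwise distinct unitary points and
(a_j·a_k)² = a² for all j < k, then a² ∈ {1/9, 1/5, 1}. -/
theorem gram_equiangular_values (p : Fin 4 → Fin 3 → ℂ) (hdist : Function.Injective p)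
    (hunit : ∀ j, dotC (p j) (p j) = 1) (a : ℂ)
    (hang : ∀ j k : Fin 4, j < k → (dotC (p j) (p k)) ^ 2 = a ^ 2) :
    a ^ 2 = 1 / 9 ∨ a ^ 2 = 1 / 5 ∨ a ^ 2 = 1 := by
  obtain ⟨g, hg0, j0, hj0⟩ : ∃ g : Fin 4 → ℂ, (∑ j, g j • p j = 0) ∧ ∃ j, g j ≠ 0 := by
    have hli : ¬ LinearIndependent ℂ p := by
      intro h
      have := h.fintype_card_le_finrank
      simp at this
    exact Fintype.not_linearIndependent_iff.mp hli
  set d01 := dotC (p 0) (p 1) with hd01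
  set d02 := dotC (p 0) (p 2) with hd02
  set d03 := dotC (p 0) (p 3) with hd03
  set d12 := dotC (p 1) (p 2) with hd12
  set d13 := dotC (p 1) (p 3) with hd13
  set d23 := dotC (p 2) (p 3) with hd23
  have hsym : ∀ j k : Fin 4, dotC (p k) (p j) = dotC (p j) (p k) := by
    intro j k
    exact Finset.sum_congr rfl fun i _ => mul_comm _ _
  set M : Matrix (Fin 4) (Fin 4) ℂ :=
    !![1, d01, d02, d03; d01, 1, d12, d13; d02, d12, 1, d23; d03, d13, d23, 1] with hM
  have hMv : M.mulVec g = 0 := by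
    have hent : ∀ j k : Fin 4, M j k = dotC (p j) (p k) := by
      intro j k
      fin_cases j <;> fin_cases k <;>
        simp [hM, hd01, hd02, hd03, hd12, hd13, hd23, hsym, (hunit _).symm] <;>
        first
          | rfl
          | exact (hunit _).symm
          | exact (hsym _ _).symm
    funext k
    have hz : ∀ i, ∑ j, g j * p j i = 0 := by
      intro i
      have := congrFun hg0 i
      simpa [Finset.sum_apply] using this
    show ∑ j, M k j * g j = 0
    calc ∑ j, M k j * g j
        = ∑ j, ∑ i, p k i * (g j * p j i) := by
          refine Finset.sum_congr rfl fun j _ => ?_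
          rw [hent k j, dotC, Finset.sum_mul]
          exact Finset.sum_congr rfl fun i _ => by ring
      _ = ∑ i, p k i * (∑ j, g j * p j i) := by
          rw [Finset.sum_comm]
          exact Finset.sum_congr rfl fun i _ => by rw [Finset.mul_sum]
      _ = 0 := by simp [hz]
  have hdet : M.det = 0 :=
    (Matrix.exists_mulVec_eq_zero_iff).mp ⟨g, fun h => hj0 (congrFun h j0), hMv⟩
  rw [hM] at hdet
  rw [Matrix.det_succ_row_zero] at hdet
  simp [Fin.sum_univ_succ, Matrix.det_fin_three, Fin.succAbove] at hdet
  have sq : ∀ (j k : Fin 4), j < k → dotC (p j) (p k) = a ∨ dotC (p j) (p k) = -a := by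
    intro j k hjk
    have h2 : (dotC (p j) (p k) - a) * (dotC (p j) (p k) + a) = 0 := by
      linear_combination hang j k hjk
    rcases mul_eq_zero.mp h2 with h | h
    · left; linear_combination h
    · right; linear_combination h
  rcases sq 0 1 (by decide) with h01 | h01 <;> rw [hd01, h01] at hdet <;>
    rcases sq 0 2 (by decide) with h02 | h02 <;> rw [hd02, h02] at hdet <;>
    rcases sq 0 3 (by decide) with h03 | h03 <;> rw [hd03, h03] at hdet <;>
    rcases sq 1 2 (by decide) with h12 | h12 <;> rw [hd12, h12] at hdet <;>
    rcases sq 1 3 (by decide) with h13 | h13 <;> rw [hd13, h13] at hdet <;>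
    rcases sq 2 3 (by decide) with h23 | h23 <;> rw [hd23, h23] at hdet <;>
    first
      | exact gram_keyA a (by linear_combination -hdet)
      | exact gram_keyB a (by linear_combination -hdet)
      | exact gram_keyC a (by linear_combination -hdet)
      | exact gram_keyA a (by linear_combination hdet)
      | exact gram_keyB a (by linear_combination hdet)
      | exact gram_keyC a (by linear_combination hdet)
end
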